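/- Let b ∈ ℝ, t₀ < t₁, γ > 0, let φ : ℝ → ℝ be continuous with φ(t) ≥ 0 for all t ∈ [t₀, t₁] and I := ∫_{t₀}^{t₁} φ(t) dt > 0, and let c ≥ 1/(2γ²·I). If y : [t₀, t₁] → ℝ is differentiable and satisfies y′(t) = c·(b − y(t))³·φ(t) for all t ∈ [t₀, t₁], then |y(t₁) − b| < γ, regardless of the initial value y(t₀). -/

import Mathlib

open intervalIntegral in
/-- The targeting construction (Construction 1 of the paper): solutions of the
ODE y′ = c(b − y)³φ(t) reach the target b within error γ at the arrival time t₁,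
whatever the departure value y(t₀), provided c ≥ 1/(2γ²∫φ). -/
theorem targeting (b t₀ t₁ γ c : ℝ) (φ y : ℝ → ℝ)
    (ht : t₀ < t₁) (hγ : 0 < γ)
    (hφcont : Continuous φ) (hφpos : ∀ t ∈ Set.Icc t₀ t₁, 0 ≤ φ t)
    (hI : 0 < ∫ t in t₀..t₁, φ t)
    (hc : c ≥ 1 / (2 * γ ^ 2 * ∫ t in t₀..t₁, φ t))
    (hy : ∀ t ∈ Set.Icc t₀ t₁, HasDerivAt y (c * (b - y t) ^ 3 * φ t) t) :
    |y t₁ - b| < γ := by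
  set I := ∫ t in t₀..t₁, φ t with hIdef
  have hle : t₀ ≤ t₁ := ht.le
  have hc0 : 0 < c := lt_of_lt_of_le (by positivity) hc
  -- v = (b - y)^2
  set v : ℝ → ℝ := fun t => (b - y t) ^ 2 with hvdef
  have hv' : ∀ t ∈ Set.Icc t₀ t₁,
      HasDerivAt v (-(2 * c * (b - y t) ^ 4 * φ t)) t := by
    intro t htI
    have hu : HasDerivAt (fun t => b - y t) (-(c * (b - y t) ^ 3 * φ t)) t :=
      (hy t htI).const_sub b
    have := hu.fun_pow 2
    refine this.congr_deriv ?_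
    push_cast
    ring
  -- v is antitone on [t₀, t₁]
  have hanti : AntitoneOn v (Set.Icc t₀ t₁) := by
    apply antitoneOn_of_deriv_nonpos (convex_Icc t₀ t₁)
    · intro t htI
      exact ((hv' t htI).continuousAt).continuousWithinAt
    · intro t htI
      rw [interior_Icc] at htI
      exact ((hv' t (Set.mem_Icc_of_Ioo htI)).differentiableAt).differentiableWithinAt
    · intro t htI
      rw [interior_Icc] at htI
      have htI' := Set.mem_Icc_of_Ioo htI
      rw [(hv' t htI').deriv]
      have h1 : 0 ≤ φ t := hφpos t htI'
      have h2 : 0 ≤ 2 * c * (b - y t) ^ 4 * φ t := by positivity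
      linarith
  by_cases hzero : ∃ s ∈ Set.Icc t₀ t₁, b - y s = 0
  · obtain ⟨s, hs, hs0⟩ := hzero
    have h1 : v t₁ ≤ v s := hanti hs (Set.right_mem_Icc.mpr hle) hs.2
    have h2 : v s = 0 := by simp [hvdef, hs0]
    have h3 : 0 ≤ v t₁ := sq_nonneg _
    have h4 : v t₁ = 0 := le_antisymm (h2 ▸ h1) h3
    have h5 : b - y t₁ = 0 := by
      have := pow_eq_zero_iff (n := 2) (by norm_num) |>.mp h4
      exact this
    have : y t₁ - b = 0 := by linarith
    rw [this]
    simpa using hγ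
  · push_neg at hzero
    have hvpos : ∀ t ∈ Set.Icc t₀ t₁, 0 < v t := by
      intro t htI
      have h := hzero t htI
      positivity
    set w : ℝ → ℝ := fun t => (v t)⁻¹ with hwdef
    have hw' : ∀ t ∈ Set.uIcc t₀ t₁, HasDerivAt w (2 * c * φ t) t := by
      intro t htI
      rw [Set.uIcc_of_le hle] at htI
      have hne : v t ≠ 0 := (hvpos t htI).ne'
      have := (hv' t htI).fun_inv hne
      refine this.congr_deriv ?_
      have hne2 : b - y t ≠ 0 := hzero t htI
      field_simp [hvdef]
      ring
    have hint : IntervalIntegrable (fun t => 2 * c * φ t) MeasureTheory.volume t₀ t₁ :=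
      (continuous_const.mul hφcont).intervalIntegrable _ _
    have hftc : ∫ t in t₀..t₁, 2 * c * φ t = w t₁ - w t₀ :=
      intervalIntegral.integral_eq_sub_of_hasDerivAt hw' hint
    have hmul : ∫ t in t₀..t₁, 2 * c * φ t = 2 * c * I := by
      rw [hIdef, ← intervalIntegral.integral_const_mul]
    have hw0 : 0 < w t₀ := inv_pos.mpr (hvpos t₀ (Set.left_mem_Icc.mpr hle))
    have hkey : 1 / γ ^ 2 ≤ 2 * c * I := by
      rw [ge_iff_le, div_le_iff₀ (by positivity)] at hc
      rw [div_le_iff₀ (by positivity)]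
      nlinarith
    have hw1 : 1 / γ ^ 2 < w t₁ := by
      have : w t₁ = w t₀ + 2 * c * I := by
        rw [← hmul, hftc]; ring
      linarith
    have hv1pos : 0 < v t₁ := hvpos t₁ (Set.right_mem_Icc.mpr hle)
    have hv1 : v t₁ < γ ^ 2 := by
      have h2 : (γ ^ 2)⁻¹ < (v t₁)⁻¹ := by
        rw [one_div] at hw1; exact hw1
      have ha : v t₁ * (v t₁)⁻¹ = 1 := mul_inv_cancel₀ hv1pos.ne'
      have hb : γ ^ 2 * (γ ^ 2)⁻¹ = 1 := mul_inv_cancel₀ (by positivity)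
      have hγ2 : (0:ℝ) < γ ^ 2 := by positivity
      have h3 : v t₁ * (γ ^ 2)⁻¹ < v t₁ * (v t₁)⁻¹ :=
        mul_lt_mul_of_pos_left h2 hv1pos
      rw [ha] at h3
      nlinarith [h3, hb, hγ2]
    have hsq : (y t₁ - b) ^ 2 < γ ^ 2 := by
      have : (y t₁ - b) ^ 2 = v t₁ := by rw [hvdef]; ring
      linarith
    nlinarith [abs_nonneg (y t₁ - b), sq_abs (y t₁ - b)]
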